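/- The Laplace mechanism satisfies ε-differential privacy: if a statistic s mapping datasets to ℝ^r has l1 global sensitivity δ₁ = max over neighboring datasets x, x' of ‖s(x) - s(x')‖₁, then the mechanism that outputs s(x) + e, where e consists of r independent draws from the Laplace distribution with location 0 and scale δ₁/ε, satisfies: for all neighboring datasets x, x' and all measurable sets Q, the density ratio of the output satisfies e^{-ε} ≤ f(s*|x)/f(s*|x') ≤ e^{ε}. -/
import Mathlib


open Real MeasureTheory Finset

lemma laplace_aux {r : ℕ} (a b t : Fin r → ℝ) (ε δ₁ : ℝ) (hε : 0 < ε) (hδ : 0 < δ₁)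
    (h : ∑ i, |a i - b i| ≤ δ₁) :
    (∏ i, (ε / (2 * δ₁)) * Real.exp (-(|t i - a i|) * ε / δ₁)) ≤
      Real.exp ε * ∏ i, (ε / (2 * δ₁)) * Real.exp (-(|t i - b i|) * ε / δ₁) := by
  rw [Finset.prod_mul_distrib, Finset.prod_mul_distrib, ← Real.exp_sum, ← Real.exp_sum,
    mul_comm (Real.exp ε), mul_assoc, ← Real.exp_add]
  have hc : (0:ℝ) ≤ ∏ _i : Fin r, ε / (2 * δ₁) := by positivity
  apply mul_le_mul_of_nonneg_left _ hc
  apply Real.exp_le_exp.mpr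
  rw [← sub_le_iff_le_add', ← Finset.sum_sub_distrib]
  have hstep : ∀ i, (-(|t i - a i|) * ε / δ₁) - (-(|t i - b i|) * ε / δ₁)
      ≤ |a i - b i| * (ε / δ₁) := by
    intro i
    have h1 : |t i - b i| - |t i - a i| ≤ |a i - b i| := by
      have := abs_sub_abs_le_abs_sub (t i - b i) (t i - a i)
      have h2 : |t i - b i - (t i - a i)| = |a i - b i| := by ring_nf
      linarith [this, h2.le, h2.ge]
    have hεδ : 0 ≤ ε / δ₁ := by positivity
    calc (-(|t i - a i|) * ε / δ₁) - (-(|t i - b i|) * ε / δ₁)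
        = (|t i - b i| - |t i - a i|) * (ε / δ₁) := by ring
      _ ≤ |a i - b i| * (ε / δ₁) := mul_le_mul_of_nonneg_right h1 hεδ
  calc ∑ i, ((-(|t i - a i|) * ε / δ₁) - (-(|t i - b i|) * ε / δ₁))
      ≤ ∑ i, |a i - b i| * (ε / δ₁) := Finset.sum_le_sum fun i _ => hstep i
    _ = (∑ i, |a i - b i|) * (ε / δ₁) := by rw [← Finset.sum_mul]
    _ ≤ δ₁ * (ε / δ₁) := by
        apply mul_le_mul_of_nonneg_right h; positivity
    _ = ε := by field_simp

/-- The Laplace mechanism satisfies ε-DP: if `s : X → ℝ^r` has l1 global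
sensitivity at most `δ₁` over neighboring datasets, then the density of the output
`s(x) + e` (with `e` i.i.d. Laplace(0, δ₁/ε) noise) satisfies
`e^{-ε} ≤ f(t|x)/f(t|x') ≤ e^{ε}` for all neighbors `x, x'` and all outputs `t`. -/
theorem laplace_mechanism_dp {X : Type*} (r : ℕ) (adj : X → X → Prop)
    (s : X → Fin r → ℝ) (ε δ₁ : ℝ) (hε : 0 < ε) (hδ : 0 < δ₁)
    (hsens : ∀ x x', adj x x' → ∑ i, |s x i - s x' i| ≤ δ₁)
    (f : X → (Fin r → ℝ) → ℝ)
    (hf : ∀ x t, f x t = ∏ i, (ε / (2 * δ₁)) * Real.exp (-(|t i - s x i|) * ε / δ₁)) :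
    ∀ x x', adj x x' → ∀ t : Fin r → ℝ,
      Real.exp (-ε) * f x' t ≤ f x t ∧ f x t ≤ Real.exp ε * f x' t := by
  intro x x' hadj t
  have hs := hsens x x' hadj
  have hs' : ∑ i, |s x' i - s x i| ≤ δ₁ := by
    simpa [abs_sub_comm] using hs
  rw [hf x t, hf x' t]
  constructor
  · have := laplace_aux (s x') (s x) t ε δ₁ hε hδ hs'
    rw [Real.exp_neg]
    rw [inv_mul_le_iff₀ (Real.exp_pos ε)] at *
    linarith [this]
  · exact laplace_aux (s x) (s x') t ε δ₁ hε hδ hs
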